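/- Let H be a finite graph whose vertices are points in ℝ^d with edges exactly between pairs at Euclidean distance at most r. Suppose x, y are vertices of H such that x is a vertex of H at maximum distance from y. Then every vertex z of H lying in W(x,y,r) = {z ∈ B(y, ‖y−x‖) : B(z,r) ⊇ B(x,r) ∩ B(y, ‖y−x‖)} satisfies N_H[x] ⊆ N_H[z]. -/

import Mathlib

open Metric

/-- `W(x,y,r)`: the set of points `z` of the open ball `B(y, ‖y-x‖)` such that
`B(z,r) ⊇ B(x,r) ∩ B(y, ‖y-x‖)`. -/
def W {d : ℕ} (x y : EuclideanSpace ℝ (Fin d)) (r : ℝ) : Set (EuclideanSpace ℝ (Fin d)) :=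
  {z | z ∈ ball y (dist y x) ∧ ball x r ∩ ball y (dist y x) ⊆ ball z r}

/-- Let `H` be the geometric graph at scale `r` on a finite vertex set `V ⊆ ℝ^d` (edges between
distinct points at distance at most `r`). If `x ∈ V` is a vertex at maximum distance from
`y ∈ V`, then every vertex `z ∈ V ∩ W(x,y,r)` satisfies `N_H[x] ⊆ N_H[z]`, i.e. every vertex
within distance `r` of `x` is within distance `r` of `z`. -/
theorem stmt_13 {d : ℕ} (V : Finset (EuclideanSpace ℝ (Fin d))) (r : ℝ) (hr : 0 < r)
    (x y : EuclideanSpace ℝ (Fin d)) (hx : x ∈ V) (hy : y ∈ V)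
    (hmax : ∀ v ∈ V, dist y v ≤ dist y x)
    (z : EuclideanSpace ℝ (Fin d)) (hzV : z ∈ V) (hzW : z ∈ W x y r) :
    {v ∈ (V : Set (EuclideanSpace ℝ (Fin d))) | dist v x ≤ r} ⊆
      {v ∈ (V : Set (EuclideanSpace ℝ (Fin d))) | dist v z ≤ r} := by
  obtain ⟨hz1, hz2⟩ := hzW
  rw [mem_ball] at hz1
  have hD : 0 < dist y x := lt_of_le_of_lt dist_nonneg hz1
  set D := dist y x with hDdef
  -- choose t
  set t : ℝ := min (r / (2 * D)) (1 / 2) with ht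
  have ht0 : 0 < t := lt_min (div_pos hr (by linarith)) (by norm_num)
  have ht1 : t ≤ 1 / 2 := min_le_right _ _
  have htD : t * D < r := by
    have h1 : t ≤ r / (2 * D) := min_le_left _ _
    have h2 : t * D ≤ r / (2 * D) * D := mul_le_mul_of_nonneg_right h1 hD.le
    have h3 : r / (2 * D) * D = r / 2 := by field_simp
    linarith
  set p : EuclideanSpace ℝ (Fin d) := x + t • (y - x) with hp
  have hpx : dist p x = t * D := by
    rw [hp, dist_eq_norm]
    simp only [add_sub_cancel_left, norm_smul, Real.norm_eq_abs, abs_of_pos ht0]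
    rw [hDdef, dist_eq_norm]
  have hyp : dist y p = (1 - t) * D := by
    rw [hp, dist_eq_norm]
    have : y - (x + t • (y - x)) = (1 - t) • (y - x) := by
      simp [sub_smul, smul_sub]; abel
    rw [this, norm_smul, Real.norm_eq_abs, abs_of_pos (by linarith), hDdef, dist_eq_norm]
  intro v hv
  obtain ⟨hvV, hvx⟩ := hv
  refine ⟨hvV, ?_⟩
  have hyv : dist y v ≤ D := hmax v hvV
  refine le_of_forall_pos_le_add fun ε hε => ?_
  set K := dist v p with hK
  have hK0 : 0 ≤ K := dist_nonneg
  set s : ℝ := min (ε / (K + 1)) 1 with hs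
  have hs0 : 0 < s := lt_min (div_pos hε (by linarith)) one_pos
  have hs1 : s ≤ 1 := min_le_right _ _
  have hsK : s * K ≤ ε := by
    have h1 : s ≤ ε / (K + 1) := min_le_left _ _
    have := mul_le_mul_of_nonneg_right h1 hK0
    calc s * K ≤ (ε / (K + 1)) * K := this
      _ ≤ ε := by
          rw [div_mul_eq_mul_div, div_le_iff₀ (by linarith)]
          nlinarith
  set w : EuclideanSpace ℝ (Fin d) := v + s • (p - v) with hw
  have hwv : dist w v = s * K := by
    rw [hw, dist_eq_norm, add_sub_cancel_left, norm_smul, Real.norm_eq_abs,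
      abs_of_pos hs0, hK, dist_eq_norm, norm_sub_rev]
  -- w is a convex combination: w = (1-s)•v + s•p
  have hwcomb : w = (1 - s) • v + s • p := by
    rw [hw, sub_smul, one_smul, smul_sub]; abel
  have hdwx : dist w x < r := by
    have h1 : dist w x ≤ (1 - s) * dist v x + s * dist p x := by
      rw [hwcomb]
      calc dist ((1 - s) • v + s • p) x
          ≤ dist ((1 - s) • v + s • p) ((1 - s) • x + s • p) + dist ((1 - s) • x + s • p) x := dist_triangle _ _ _
        _ = (1 - s) * dist v x + s * dist p x := by
            congr 1
            · rw [dist_eq_norm]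
              have : (1 - s) • v + s • p - ((1 - s) • x + s • p) = (1 - s) • (v - x) := by
                rw [smul_sub]; abel
              rw [this, norm_smul, Real.norm_eq_abs, abs_of_nonneg (by linarith), dist_eq_norm]
            · rw [dist_eq_norm]
              have : (1 - s) • x + s • p - x = s • (p - x) := by
                rw [smul_sub, sub_smul, one_smul]; abel
              rw [this, norm_smul, Real.norm_eq_abs, abs_of_pos hs0, dist_eq_norm]
    rw [hpx] at h1
    nlinarith
  have hdwy : dist y w < D := by
    have h1 : dist w y ≤ (1 - s) * dist v y + s * dist p y := by
      rw [hwcomb]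
      calc dist ((1 - s) • v + s • p) y
          ≤ dist ((1 - s) • v + s • p) ((1 - s) • y + s • p) + dist ((1 - s) • y + s • p) y := dist_triangle _ _ _
        _ = (1 - s) * dist v y + s * dist p y := by
            congr 1
            · rw [dist_eq_norm]
              have : (1 - s) • v + s • p - ((1 - s) • y + s • p) = (1 - s) • (v - y) := by
                rw [smul_sub]; abel
              rw [this, norm_smul, Real.norm_eq_abs, abs_of_nonneg (by linarith), dist_eq_norm]
            · rw [dist_eq_norm]
              have : (1 - s) • y + s • p - y = s • (p - y) := by
                rw [smul_sub, sub_smul, one_smul]; abel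
              rw [this, norm_smul, Real.norm_eq_abs, abs_of_pos hs0, dist_eq_norm]
    rw [dist_comm y w]
    rw [dist_comm p y] at h1
    rw [hyp] at h1
    have hvy : dist v y ≤ D := by rw [dist_comm]; exact hyv
    have hint : (1 - s) * dist v y ≤ (1 - s) * D :=
      mul_le_mul_of_nonneg_left hvy (by linarith)
    nlinarith [mul_pos (mul_pos hs0 ht0) hD]
  have hwz : dist w z < r := by
    have hm1 : w ∈ ball x r := mem_ball.mpr hdwx
    have hm2 : w ∈ ball y D := mem_ball.mpr (by rw [dist_comm]; exact hdwy)
    exact mem_ball.mp (hz2 ⟨hm1, hm2⟩)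
  calc dist v z ≤ dist v w + dist w z := dist_triangle _ _ _
    _ ≤ s * K + r := by rw [dist_comm v w]; linarith [hwv]
    _ ≤ r + ε := by linarith
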